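/- Let C be an essentially small additive category and m an object of C. The forgetful functor U : m\C → C induces an isomorphism of Grothendieck groups K(U) : K(m\C) → K(C), whose inverse is K(S) where S : C → m\C is the section a ↦ (a, 0). -/

import Mathlib

open CategoryTheory CategoryTheory.Limits

universe v u

variable (C : Type u) [Category.{v} C]

/-- The subgroup of relations `[p a b] - [a] - [b]` defining the Grothendieck group of a
category with a chosen binary product operation `p`. -/
def kRel (p : C → C → C) :
    AddSubgroup (FreeAbelianGroup (Quotient (CategoryTheory.isIsomorphicSetoid C))) :=
  AddSubgroup.closure
    {x | ∃ a b : C,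
      x = FreeAbelianGroup.of (Quotient.mk (CategoryTheory.isIsomorphicSetoid C) (p a b)) -
        FreeAbelianGroup.of (Quotient.mk (CategoryTheory.isIsomorphicSetoid C) a) -
        FreeAbelianGroup.of (Quotient.mk (CategoryTheory.isIsomorphicSetoid C) b)}

/-- The Grothendieck group `K(C)` of the monoid of isomorphism classes of objects of `C`,
with addition induced by the binary product operation `p`. -/
abbrev KGrp (p : C → C → C) :=
  FreeAbelianGroup (Quotient (CategoryTheory.isIsomorphicSetoid C)) ⧸ kRel C p

/-- The class `[a] ∈ K(C)` of an object `a`. -/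
def kCls (p : C → C → C) (a : C) : KGrp C p :=
  QuotientAddGroup.mk (FreeAbelianGroup.of (Quotient.mk (CategoryTheory.isIsomorphicSetoid C) a))

lemma kCls_eq_of_iso (p : C → C → C) {a b : C} (h : a ≅ b) : kCls C p a = kCls C p b := by
  unfold kCls
  have : Quotient.mk (CategoryTheory.isIsomorphicSetoid C) a =
      Quotient.mk (CategoryTheory.isIsomorphicSetoid C) b := Quotient.sound ⟨h⟩
  rw [this]

lemma kCls_prod (p : C → C → C) (a b : C) :
    kCls C p (p a b) = kCls C p a + kCls C p b := by
  have h : kCls C p (p a b) - kCls C p a - kCls C p b = 0 := by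
    show QuotientAddGroup.mk _ - QuotientAddGroup.mk _ - QuotientAddGroup.mk _ = 0
    rw [← QuotientAddGroup.mk_sub, ← QuotientAddGroup.mk_sub]
    exact (QuotientAddGroup.eq_zero_iff _).mpr (AddSubgroup.subset_closure ⟨a, b, rfl⟩)
  have := sub_eq_zero.mp (by rw [sub_sub] at h; exact h)
  exact this

def kMap (p : C → C → C) {G : Type*} [AddCommGroup G] (f : C → G)
    (hiso : ∀ a b : C, (a ≅ b) → f a = f b)
    (hrel : ∀ a b : C, f (p a b) = f a + f b) : KGrp C p →+ G :=
  QuotientAddGroup.lift (kRel C p)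
    (FreeAbelianGroup.lift (Quotient.lift f (fun a b ⟨e⟩ => hiso a b e)))
    (by
      intro x hx
      refine AddSubgroup.closure_induction ?_ (zero_mem _) (fun _ _ _ _ hy hz => add_mem hy hz)
        (fun _ _ hy => neg_mem hy) hx
      rintro y ⟨a, b, rfl⟩
      simp [AddMonoidHom.mem_ker, hrel a b, sub_sub])

lemma kMap_kCls (p : C → C → C) {G : Type*} [AddCommGroup G] (f : C → G)
    (hiso : ∀ a b : C, (a ≅ b) → f a = f b)
    (hrel : ∀ a b : C, f (p a b) = f a + f b) (a : C) :
    kMap C p f hiso hrel (kCls C p a) = f a := by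
  simp [kMap, kCls, QuotientAddGroup.lift_mk']

example : True := trivial

lemma kHom_ext (p : C → C → C) {G : Type*} [AddCommGroup G] (φ ψ : KGrp C p →+ G)
    (h : ∀ a : C, φ (kCls C p a) = ψ (kCls C p a)) : φ = ψ := by
  refine AddMonoidHom.ext fun z => ?_
  induction z using QuotientAddGroup.induction_on with
  | H x =>
    induction x using FreeAbelianGroup.induction_on with
    | zero => simp
    | of q =>
      induction q using Quotient.ind with
      | _ a => exact h a
    | neg q ih => rw [QuotientAddGroup.mk_neg, map_neg, map_neg, ih]
    | add y z ihy ihz => rw [QuotientAddGroup.mk_add, map_add, map_add, ihy, ihz]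

lemma kCls_section (m : C) [Preadditive C] [HasFiniteBiproducts C] (x : Under m) :
    kCls (Under m) (fun x y => Under.mk (prod.lift (x.hom : m ⟶ x.right)
        (y.hom : m ⟶ y.right))) (Under.mk (0 : m ⟶ x.right)) =
    kCls (Under m) (fun x y => Under.mk (prod.lift (x.hom : m ⟶ x.right)
        (y.hom : m ⟶ y.right))) x := by
  have h1 := kCls_prod (Under m) (fun x y => Under.mk (prod.lift (x.hom : m ⟶ x.right)
        (y.hom : m ⟶ y.right))) x x
  have h2 := kCls_prod (Under m) (fun x y => Under.mk (prod.lift (x.hom : m ⟶ x.right)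
        (y.hom : m ⟶ y.right))) x (Under.mk (0 : m ⟶ x.right))
  have e : Under.mk (prod.lift x.hom x.hom) ≅ Under.mk (prod.lift x.hom (0 : m ⟶ x.right)) := by
    refine Under.isoMk ⟨prod.lift prod.fst (prod.snd - prod.fst),
      prod.lift prod.fst (prod.snd + prod.fst), ?_, ?_⟩ ?_ <;>
      apply Limits.prod.hom_ext <;>
      simp [Preadditive.comp_add, Preadditive.comp_sub, prod.lift_fst, prod.lift_snd]
  have he := kCls_eq_of_iso (Under m) (fun x y => Under.mk (prod.lift (x.hom : m ⟶ x.right)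
        (y.hom : m ⟶ y.right))) e
  rw [h1] at he
  exact (add_left_cancel (he.trans h2)).symm

/-- For an additive category `C` and an object `m`, the forgetful functor `U : m\C ⥤ C`
induces an isomorphism of Grothendieck groups `K(U) : K(m\C) → K(C)` (the group homomorphism
determined by `[x] ↦ [U x]`), whose inverse is `K(S)`, induced by the section `S : a ↦ (a,0)`.
Products in `m\C` are `(a,f) × (a',f') = (a ⊕ a', (f,f'))`, products in `C` are `a ⨯ b`. -/
theorem K_forget_iso_K_section [Preadditive C] [HasFiniteBiproducts C] (m : C) :
    ∃ (Φ : KGrp (Under m) (fun x y => Under.mk (prod.lift (x.hom : m ⟶ x.right)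
            (y.hom : m ⟶ y.right))) →+ KGrp C (fun a b => a ⨯ b))
      (Ψ : KGrp C (fun a b => a ⨯ b) →+ KGrp (Under m)
        (fun x y => Under.mk (prod.lift (x.hom : m ⟶ x.right) (y.hom : m ⟶ y.right)))),
      (∀ x : Under m, Φ (kCls _ _ x) = kCls _ _ ((Under.forget m).obj x)) ∧
      (∀ a : C, Ψ (kCls _ _ a) = kCls _ _ (Under.mk (0 : m ⟶ a))) ∧
      Ψ.comp Φ = AddMonoidHom.id _ ∧ Φ.comp Ψ = AddMonoidHom.id _ := by
  have hiso₁ : ∀ x y : Under m, (x ≅ y) →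
      kCls C (fun a b => a ⨯ b) x.right = kCls C (fun a b => a ⨯ b) y.right :=
    fun x y e => kCls_eq_of_iso C _ ((Under.forget m).mapIso e)
  have hrel₁ : ∀ x y : Under m,
      kCls C (fun a b => a ⨯ b) ((fun x y : Under m => Under.mk (prod.lift (x.hom : m ⟶ x.right)
        (y.hom : m ⟶ y.right))) x y).right =
      kCls C (fun a b => a ⨯ b) x.right + kCls C (fun a b => a ⨯ b) y.right :=
    fun x y => kCls_prod C _ x.right y.right
  have hiso₂ : ∀ a b : C, (a ≅ b) →
      kCls (Under m) (fun x y => Under.mk (prod.lift (x.hom : m ⟶ x.right)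
        (y.hom : m ⟶ y.right))) (Under.mk (0 : m ⟶ a)) =
      kCls (Under m) _ (Under.mk (0 : m ⟶ b)) :=
    fun a b e => kCls_eq_of_iso (Under m) _ (Under.isoMk e (by simp))
  have hrel₂ : ∀ a b : C,
      kCls (Under m) (fun x y => Under.mk (prod.lift (x.hom : m ⟶ x.right)
        (y.hom : m ⟶ y.right))) (Under.mk (0 : m ⟶ a ⨯ b)) =
      kCls (Under m) _ (Under.mk (0 : m ⟶ a)) + kCls (Under m) _ (Under.mk (0 : m ⟶ b)) := by
    intro a b
    have h0 : Under.mk (0 : m ⟶ a ⨯ b) = Under.mk (prod.lift (0 : m ⟶ a) (0 : m ⟶ b)) := by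
      congr 1
      apply Limits.prod.hom_ext <;> simp [prod.lift_fst, prod.lift_snd]
    rw [h0]
    exact kCls_prod (Under m) _ (Under.mk (0 : m ⟶ a)) (Under.mk (0 : m ⟶ b))
  refine ⟨kMap (Under m) _ (fun x => kCls C (fun a b => a ⨯ b) x.right) hiso₁ hrel₁,
    kMap C _ (fun a => kCls (Under m) (fun x y => Under.mk (prod.lift (x.hom : m ⟶ x.right)
        (y.hom : m ⟶ y.right))) (Under.mk (0 : m ⟶ a))) hiso₂ hrel₂,
    fun x => kMap_kCls _ _ _ _ _ x, fun a => kMap_kCls _ _ _ _ _ a, ?_, ?_⟩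
  · refine kHom_ext (Under m) _ _ _ fun x => ?_
    simp only [AddMonoidHom.comp_apply, AddMonoidHom.id_apply, kMap_kCls]
    exact kCls_section C m x
  · refine kHom_ext C _ _ _ fun a => ?_
    simp only [AddMonoidHom.comp_apply, AddMonoidHom.id_apply, kMap_kCls]
    rfl
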